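/- Let H : [0,∞) → [a,b] ⊂ (1/2,1) be measurable and fix t > 0. Then there exist constants 0 < c < C and h_0 > 0 such that for all h ≥ h_0, c · (t+h)^{2H_{t+h}−1} ≤ R_H(t+h, t) ≤ C · (t+h)^{2H_{t+h}−1}. -/

import Mathlib

open MeasureTheory Set Filter

/-- The Beta function `β(x,y) = Γ(x)Γ(y)/Γ(x+y)`. -/
noncomputable def Beta (x y : ℝ) : ℝ := Real.Gamma x * Real.Gamma y / Real.Gamma (x + y)

/-- The normalizing constant `c_H = (H(2H−1)/β(2−2H, H−1/2))^{1/2}`. -/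
noncomputable def cH (H : ℝ) : ℝ := Real.sqrt (H * (2 * H - 1) / Beta (2 - 2 * H) (H - 1 / 2))

/-- The kernel `K_H(t,s)`; equal to
`c_{H_t} s^{1/2−H_t} ∫_s^t (u−s)^{H_t−3/2} u^{H_t−1/2} du` for `s ≤ t` and `0` for `s > t`. -/
noncomputable def KH (H : ℝ → ℝ) (t s : ℝ) : ℝ :=
  if s ≤ t then
    cH (H t) * s ^ ((1 : ℝ) / 2 - H t) *
      ∫ u in s..t, (u - s) ^ (H t - 3 / 2) * u ^ (H t - 1 / 2)
  else 0

/-- The covariance function `R_H(t,s) = ∫_0^{min(s,t)} K_H(t,u) K_H(s,u) du`. -/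
noncomputable def RH (H : ℝ → ℝ) (t s : ℝ) : ℝ :=
  ∫ u in (0 : ℝ)..(min s t), KH H t u * KH H s u

lemma cH_nonneg (x : ℝ) : 0 ≤ cH x := Real.sqrt_nonneg _

lemma measurable_inner (S p q : ℝ) :
    Measurable (fun u : ℝ => ∫ v in u..S, (v - u) ^ p * v ^ q) := by
  have hker : Measurable (fun r : ℝ × ℝ => (r.2 - r.1) ^ p * r.2 ^ q) := by
    measurability
  set g1 : ℝ × ℝ → ℝ := fun r => if r.1 < r.2 ∧ r.2 ≤ S then (r.2 - r.1) ^ p * r.2 ^ q else 0 with hg1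
  set g2 : ℝ × ℝ → ℝ := fun r => if S < r.2 ∧ r.2 ≤ r.1 then (r.2 - r.1) ^ p * r.2 ^ q else 0 with hg2
  have hg1m : Measurable g1 := by
    apply Measurable.ite _ hker measurable_const
    exact (measurableSet_lt measurable_fst measurable_snd).inter
      (measurableSet_le measurable_snd measurable_const)
  have hg2m : Measurable g2 := by
    apply Measurable.ite _ hker measurable_const
    exact (measurableSet_lt measurable_const measurable_snd).inter
      (measurableSet_le measurable_snd measurable_fst)
  have h1 : Measurable (fun u : ℝ => ∫ v in Ioc u S, (v - u) ^ p * v ^ q) := by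
    have e1 : (fun u : ℝ => ∫ v in Ioc u S, (v - u) ^ p * v ^ q)
        = fun u => ∫ v, g1 (u, v) := by
      funext u
      rw [← integral_indicator measurableSet_Ioc]
      congr 1; funext v
      simp [hg1, indicator_apply, mem_Ioc]
    rw [e1]
    exact (hg1m.stronglyMeasurable.integral_prod_right' (ν := (volume : Measure ℝ))).measurable
  have h2 : Measurable (fun u : ℝ => ∫ v in Ioc S u, (v - u) ^ p * v ^ q) := by
    have e2 : (fun u : ℝ => ∫ v in Ioc S u, (v - u) ^ p * v ^ q)
        = fun u => ∫ v, g2 (u, v) := by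
      funext u
      rw [← integral_indicator measurableSet_Ioc]
      congr 1; funext v
      simp [hg2, indicator_apply, mem_Ioc]
    rw [e2]
    exact (hg2m.stronglyMeasurable.integral_prod_right' (ν := (volume : Measure ℝ))).measurable
  exact h1.sub h2

lemma measurable_KH (H : ℝ → ℝ) (S : ℝ) : Measurable (fun u => KH H S u) := by
  unfold KH
  refine Measurable.ite (measurableSet_le measurable_id measurable_const) ?_ measurable_const
  exact (measurable_const.mul (by measurability)).mul (measurable_inner S _ _)

lemma KH_nonneg {H : ℝ → ℝ} {S u : ℝ} (hu : 0 ≤ u) : 0 ≤ KH H S u := by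
  unfold KH
  split
  · rename_i hle
    apply mul_nonneg (mul_nonneg (cH_nonneg _) (Real.rpow_nonneg hu _))
    apply intervalIntegral.integral_nonneg hle
    intro v hv
    exact mul_nonneg (Real.rpow_nonneg (sub_nonneg.mpr hv.1) _)
      (Real.rpow_nonneg (le_trans hu hv.1) _)
  · exact le_refl 0



lemma Beta_pos' {x : ℝ} (h1 : 1/2 < x) (h2 : x < 1) : 0 < Beta (2 - 2*x) (x - 1/2) := by
  unfold Beta
  have g1 : 0 < Real.Gamma (2 - 2*x) := Real.Gamma_pos_of_pos (by linarith)
  have g2 : 0 < Real.Gamma (x - 1/2) := Real.Gamma_pos_of_pos (by linarith)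
  have g3 : 0 < Real.Gamma (2 - 2*x + (x - 1/2)) := Real.Gamma_pos_of_pos (by linarith)
  positivity

lemma cH_pos {x : ℝ} (h1 : 1/2 < x) (h2 : x < 1) : 0 < cH x := by
  have hB := Beta_pos' h1 h2
  unfold cH
  apply Real.sqrt_pos.mpr
  apply div_pos (by nlinarith) hB

lemma gamma_contAt {y : ℝ} (hy : 0 < y) : ContinuousAt Real.Gamma y :=
  (Real.differentiableAt_Gamma (fun m => by
    have h : -(m:ℝ) ≤ 0 := neg_nonpos.mpr (Nat.cast_nonneg m)
    exact (show -(m:ℝ) < y by linarith).ne')).continuousAt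

lemma Beta_comp_contAt {x : ℝ} (h1 : 1/2 < x) (h2 : x < 1) :
    ContinuousAt (fun x : ℝ => Beta (2 - 2*x) (x - 1/2)) x := by
  unfold Beta
  have c1 : ContinuousAt (fun x : ℝ => Real.Gamma (2 - 2*x)) x :=
    ContinuousAt.comp' (f := fun x : ℝ => 2 - 2*x) (gamma_contAt (show (0:ℝ) < 2 - 2*x by linarith)) (by fun_prop)
  have c2 : ContinuousAt (fun x : ℝ => Real.Gamma (x - 1/2)) x :=
    ContinuousAt.comp' (f := fun x : ℝ => x - 1/2) (gamma_contAt (show (0:ℝ) < x - 1/2 by linarith)) (by fun_prop)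
  have c3 : ContinuousAt (fun x : ℝ => Real.Gamma (2 - 2*x + (x - 1/2))) x :=
    ContinuousAt.comp' (f := fun x : ℝ => 2 - 2*x + (x - 1/2)) (gamma_contAt (show (0:ℝ) < 2 - 2*x + (x - 1/2) by linarith)) (by fun_prop)
  exact (c1.mul c2).div c3 (Real.Gamma_pos_of_pos (by linarith)).ne'

lemma cH_contOn {a b : ℝ} (ha : 1/2 < a) (hb : b < 1) : ContinuousOn cH (Icc a b) := by
  have hrw : cH = fun x => Real.sqrt (x * (2*x - 1) / Beta (2 - 2*x) (x - 1/2)) := rfl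
  rw [hrw]
  intro x hx
  have h1 : 1/2 < x := lt_of_lt_of_le ha hx.1
  have h2 : x < 1 := lt_of_le_of_lt hx.2 hb
  exact (Real.continuous_sqrt.continuousAt.comp
    (((by fun_prop : ContinuousAt (fun x : ℝ => x * (2*x - 1)) x)).div
      (Beta_comp_contAt h1 h2) (Beta_pos' h1 h2).ne')).continuousWithinAt

lemma cH_bounds {a b : ℝ} (ha : 1/2 < a) (hab : a ≤ b) (hb : b < 1) :
    ∃ m M : ℝ, 0 < m ∧ ∀ x ∈ Icc a b, m ≤ cH x ∧ cH x ≤ M := by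
  obtain ⟨x₀, hx₀, hmin⟩ := isCompact_Icc.exists_isMinOn (nonempty_Icc.mpr hab)
    (cH_contOn ha hb)
  obtain ⟨x₁, hx₁, hmax⟩ := isCompact_Icc.exists_isMaxOn (nonempty_Icc.mpr hab)
    (cH_contOn ha hb)
  exact ⟨cH x₀, cH x₁, cH_pos (lt_of_lt_of_le ha hx₀.1) (lt_of_le_of_lt hx₀.2 hb),
    fun x hx => ⟨isMinOn_iff.mp hmin x hx, isMaxOn_iff.mp hmax x hx⟩⟩

lemma rpow_between {u x p q : ℝ} (hu : 0 < u) (h1 : p ≤ x) (h2 : x ≤ q) :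
    min (u ^ p) (u ^ q) ≤ u ^ x ∧ u ^ x ≤ max (u ^ p) (u ^ q) := by
  rcases le_total u 1 with h | h
  · exact ⟨le_trans (min_le_right _ _) (Real.rpow_le_rpow_of_exponent_ge hu h h2),
      le_trans (Real.rpow_le_rpow_of_exponent_ge hu h h1) (le_max_left _ _)⟩
  · exact ⟨le_trans (min_le_left _ _) (Real.rpow_le_rpow_of_exponent_le h h1),
      le_trans (Real.rpow_le_rpow_of_exponent_le h h2) (le_max_right _ _)⟩


lemma intervalIntegrable_shift_rpow (u S p : ℝ) (hp : -1 < p) :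
    IntervalIntegrable (fun v => (v - u) ^ p) volume u S := by
  have := (intervalIntegral.intervalIntegrable_rpow' (a := 0) (b := S - u) hp).comp_sub_right u
  simpa using this

lemma intervalIntegrable_inner {u S : ℝ} (p q : ℝ) (hu : 0 < u) (huS : u ≤ S) (hp : -1 < p) :
    IntervalIntegrable (fun v => (v - u) ^ p * v ^ q) volume u S := by
  apply (intervalIntegrable_shift_rpow u S p hp).mul_continuousOn
  rw [uIcc_of_le huS]
  intro v hv
  exact (Real.continuousAt_rpow_const v q (Or.inl (lt_of_lt_of_le hu hv.1).ne')).continuousWithinAt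

lemma integral_shift_rpow {u S p : ℝ} (hp : -1 < p) :
    (∫ v in u..S, (v - u) ^ p) = (S - u) ^ (p + 1) / (p + 1) := by
  rw [intervalIntegral.integral_comp_sub_right (fun x => x ^ p) u]
  rw [integral_rpow (Or.inl hp), sub_self, Real.zero_rpow (by linarith)]
  ring

lemma inner_upper {u S Hv : ℝ} (hu : 0 < u) (huS : u ≤ S) (h1 : 1/2 < Hv) (h2 : Hv < 1) :
    (∫ v in u..S, (v - u) ^ (Hv - 3/2) * v ^ (Hv - 1/2))
      ≤ S ^ (Hv - 1/2) * (S - u) ^ (Hv - 1/2) / (Hv - 1/2) := by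
  have hp : (-1:ℝ) < Hv - 3/2 := by linarith
  have hintl := intervalIntegrable_inner (Hv - 3/2) (Hv - 1/2) hu huS hp
  have hintr : IntervalIntegrable (fun v => (v - u) ^ (Hv - 3/2) * S ^ (Hv - 1/2)) volume u S :=
    (intervalIntegrable_shift_rpow u S _ hp).mul_const _
  have mono := intervalIntegral.integral_mono_on huS hintl hintr (fun v hv => by
    have h0 : (0:ℝ) ≤ v - u := sub_nonneg.mpr hv.1
    have hb : v ^ (Hv - 1/2) ≤ S ^ (Hv - 1/2) :=
      Real.rpow_le_rpow (le_trans hu.le hv.1) hv.2 (by linarith)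
    exact mul_le_mul_of_nonneg_left hb (Real.rpow_nonneg h0 _))
  refine mono.trans (le_of_eq ?_)
  rw [intervalIntegral.integral_mul_const, integral_shift_rpow hp,
    show Hv - 3/2 + 1 = Hv - 1/2 by ring]
  ring

lemma inner_lower1 {u S Hv : ℝ} (hu : 0 < u) (huS : u ≤ S) (h1 : 1/2 < Hv) (h2 : Hv < 1) :
    (S ^ (2*Hv - 1) - u ^ (2*Hv - 1)) / (2*Hv - 1)
      ≤ ∫ v in u..S, (v - u) ^ (Hv - 3/2) * v ^ (Hv - 1/2) := by
  have hp : (-1:ℝ) < Hv - 3/2 := by linarith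
  have hintr := intervalIntegrable_inner (Hv - 3/2) (Hv - 1/2) hu huS hp
  have hintl : IntervalIntegrable (fun v : ℝ => v ^ (2*Hv - 2)) volume u S :=
    intervalIntegral.intervalIntegrable_rpow' (by linarith)
  have hne : ∀ᵐ v : ℝ ∂volume, v ≠ u := by
    rw [ae_iff]
    have : {v : ℝ | ¬ v ≠ u} = {u} := by ext v; simp
    rw [this]
    exact measure_singleton u
  have hae : ∀ᵐ v ∂(volume.restrict (Icc u S)),
      v ^ (2*Hv - 2) ≤ (v - u) ^ (Hv - 3/2) * v ^ (Hv - 1/2) := by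
    filter_upwards [ae_restrict_mem measurableSet_Icc,
      hne.filter_mono (ae_mono Measure.restrict_le_self)] with v hv hvne
    have huv : u < v := lt_of_le_of_ne hv.1 (Ne.symm hvne)
    have hv0 : 0 < v := lt_trans hu huv
    have e : v ^ (2*Hv - 2) = v ^ (Hv - 3/2) * v ^ (Hv - 1/2) := by
      rw [← Real.rpow_add hv0, show Hv - 3/2 + (Hv - 1/2) = 2*Hv - 2 by ring]
    rw [e]
    apply mul_le_mul_of_nonneg_right _ (Real.rpow_nonneg hv0.le _)
    exact Real.rpow_le_rpow_of_nonpos (by linarith) (sub_le_self v hu.le) (by linarith)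
  refine le_trans (le_of_eq ?_) (intervalIntegral.integral_mono_ae_restrict huS hintl hintr hae)
  rw [integral_rpow (Or.inl (by linarith : (-1:ℝ) < 2*Hv - 2)),
    show 2*Hv - 2 + 1 = 2*Hv - 1 by ring]

lemma inner_lower2 {u S Hv : ℝ} (hu : 0 < u) (huS : u < S) (h1 : 1/2 < Hv) (h2 : Hv < 1) :
    u ^ (Hv - 1/2) * (S - u) ^ (Hv - 1/2)
      ≤ ∫ v in u..S, (v - u) ^ (Hv - 3/2) * v ^ (Hv - 1/2) := by
  have hp : (-1:ℝ) < Hv - 3/2 := by linarith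
  have hintr := intervalIntegrable_inner (Hv - 3/2) (Hv - 1/2) hu huS.le hp
  have hne : ∀ᵐ v : ℝ ∂volume, v ≠ u := by
    rw [ae_iff]
    have : {v : ℝ | ¬ v ≠ u} = {u} := by ext v; simp
    rw [this]
    exact measure_singleton u
  have hae : ∀ᵐ v ∂(volume.restrict (Icc u S)),
      (S - u) ^ (Hv - 3/2) * u ^ (Hv - 1/2) ≤ (v - u) ^ (Hv - 3/2) * v ^ (Hv - 1/2) := by
    filter_upwards [ae_restrict_mem measurableSet_Icc,
      hne.filter_mono (ae_mono Measure.restrict_le_self)] with v hv hvne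
    have huv : u < v := lt_of_le_of_ne hv.1 (Ne.symm hvne)
    apply mul_le_mul
    · exact Real.rpow_le_rpow_of_nonpos (by linarith) (by linarith [hv.2]) (by linarith)
    · exact Real.rpow_le_rpow hu.le hv.1 (by linarith)
    · exact Real.rpow_nonneg hu.le _
    · exact Real.rpow_nonneg (by linarith) _
  have := intervalIntegral.integral_mono_ae_restrict huS.le intervalIntegrable_const hintr hae
  refine le_trans (le_of_eq ?_) this
  rw [intervalIntegral.integral_const, smul_eq_mul,
    show Hv - 1/2 = 1 + (Hv - 3/2) by ring, Real.rpow_add (by linarith : (0:ℝ) < S - u),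
    Real.rpow_one]
  ring


lemma KH_le {a : ℝ} {H : ℝ → ℝ} {S u M : ℝ} (ha : 1/2 < a) (hu : 0 < u) (huS : u ≤ S)
    (hH1 : 1/2 < H S) (hH2 : H S < 1) (haH : a ≤ H S) (hM : cH (H S) ≤ M) :
    KH H S u ≤ M / (a - 1/2) * u ^ ((1:ℝ)/2 - H S) * S ^ (2 * H S - 1) := by
  have hS : 0 < S := lt_of_lt_of_le hu huS
  have hM0 : 0 ≤ M := le_trans (cH_nonneg _) hM
  unfold KH
  rw [if_pos huS]
  have hI0 : 0 ≤ ∫ v in u..S, (v - u) ^ (H S - 3/2) * v ^ (H S - 1/2) := by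
    apply intervalIntegral.integral_nonneg huS
    intro v hv
    exact mul_nonneg (Real.rpow_nonneg (sub_nonneg.mpr hv.1) _)
      (Real.rpow_nonneg (le_trans hu.le hv.1) _)
  have step : (∫ v in u..S, (v - u) ^ (H S - 3/2) * v ^ (H S - 1/2))
      ≤ S ^ (2 * H S - 1) / (a - 1/2) := by
    refine (inner_upper hu huS hH1 hH2).trans ?_
    have h2 : (S - u) ^ (H S - 1/2) ≤ S ^ (H S - 1/2) :=
      Real.rpow_le_rpow (by linarith) (by linarith) (by linarith)
    have e : S ^ (H S - 1/2) * (S - u) ^ (H S - 1/2) ≤ S ^ (2 * H S - 1) := by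
      calc S ^ (H S - 1/2) * (S - u) ^ (H S - 1/2)
          ≤ S ^ (H S - 1/2) * S ^ (H S - 1/2) :=
            mul_le_mul_of_nonneg_left h2 (Real.rpow_nonneg hS.le _)
        _ = S ^ (2 * H S - 1) := by
            rw [← Real.rpow_add hS, show H S - 1/2 + (H S - 1/2) = 2 * H S - 1 by ring]
    calc S ^ (H S - 1/2) * (S - u) ^ (H S - 1/2) / (H S - 1/2)
        ≤ S ^ (2 * H S - 1) / (H S - 1/2) := by
          gcongr
      _ ≤ S ^ (2 * H S - 1) / (a - 1/2) := by
          apply div_le_div_of_nonneg_left (Real.rpow_nonneg hS.le _) (by linarith) (by linarith)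
  calc cH (H S) * u ^ ((1:ℝ)/2 - H S) * (∫ v in u..S, (v - u) ^ (H S - 3/2) * v ^ (H S - 1/2))
      ≤ M * u ^ ((1:ℝ)/2 - H S) * (S ^ (2 * H S - 1) / (a - 1/2)) := by
        apply mul_le_mul (mul_le_mul_of_nonneg_right hM (Real.rpow_nonneg hu.le _)) step hI0
          (mul_nonneg hM0 (Real.rpow_nonneg hu.le _))
    _ = M / (a - 1/2) * u ^ ((1:ℝ)/2 - H S) * S ^ (2 * H S - 1) := by ring

lemma KH_ge_far {a : ℝ} {H : ℝ → ℝ} {S u m : ℝ} (ha : 1/2 < a) (hu : 0 < u) (h2u : 2*u ≤ S)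
    (hH1 : 1/2 < H S) (hH2 : H S < 1) (haH : a ≤ H S) (hm : m ≤ cH (H S)) (hm0 : 0 ≤ m) :
    m * (1 - 2 ^ ((1:ℝ) - 2*a)) * u ^ ((1:ℝ)/2 - H S) * S ^ (2 * H S - 1) ≤ KH H S u := by
  have hS : 0 < S := by linarith
  have huS : u ≤ S := by linarith
  have hκ1 : (2:ℝ) ^ ((1:ℝ) - 2*a) < 1 :=
    Real.rpow_lt_one_of_one_lt_of_neg one_lt_two (by linarith)
  unfold KH
  rw [if_pos huS]
  have he0 : 0 < 2 * H S - 1 := by linarith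
  have hSe : 0 ≤ S ^ (2 * H S - 1) := Real.rpow_nonneg hS.le _
  have hue : u ^ (2 * H S - 1) ≤ S ^ (2 * H S - 1) * 2 ^ ((1:ℝ) - 2 * H S) := by
    calc u ^ (2 * H S - 1) ≤ (S/2) ^ (2 * H S - 1) :=
          Real.rpow_le_rpow hu.le (by linarith) he0.le
      _ = S ^ (2 * H S - 1) / 2 ^ (2 * H S - 1) := Real.div_rpow hS.le (by norm_num : (0:ℝ) ≤ 2) _
      _ = S ^ (2 * H S - 1) * 2 ^ (-(2 * H S - 1)) := by
          rw [Real.rpow_neg (by norm_num), div_eq_mul_inv]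
      _ = S ^ (2 * H S - 1) * 2 ^ ((1:ℝ) - 2 * H S) := by
          rw [show -(2 * H S - 1) = (1:ℝ) - 2 * H S by ring]
  have h2e : (2:ℝ) ^ ((1:ℝ) - 2 * H S) ≤ 2 ^ ((1:ℝ) - 2*a) :=
    Real.rpow_le_rpow_of_exponent_le one_le_two (by linarith)
  have hIl := inner_lower1 hu huS hH1 hH2
  have step : S ^ (2 * H S - 1) * (1 - 2 ^ ((1:ℝ) - 2*a))
      ≤ ∫ v in u..S, (v - u) ^ (H S - 3/2) * v ^ (H S - 1/2) := by
    refine le_trans ?_ hIl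
    rw [le_div_iff₀ he0]
    have hmul : S ^ (2 * H S - 1) * 2 ^ ((1:ℝ) - 2 * H S)
        ≤ S ^ (2 * H S - 1) * 2 ^ ((1:ℝ) - 2*a) := mul_le_mul_of_nonneg_left h2e hSe
    have he1 : 2 * H S - 1 ≤ 1 := by linarith
    have hx0 : 0 ≤ S ^ (2 * H S - 1) * (1 - 2 ^ ((1:ℝ) - 2*a)) :=
      mul_nonneg hSe (by linarith)
    nlinarith [hue, hmul]
  refine le_trans (le_of_eq (by ring :
      m * (1 - 2 ^ ((1:ℝ) - 2*a)) * u ^ ((1:ℝ)/2 - H S) * S ^ (2 * H S - 1)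
        = (m * u ^ ((1:ℝ)/2 - H S)) * (S ^ (2 * H S - 1) * (1 - 2 ^ ((1:ℝ) - 2*a))))) ?_
  exact mul_le_mul (mul_le_mul_of_nonneg_right hm (Real.rpow_nonneg hu.le _)) step
    (mul_nonneg hSe (by linarith)) (mul_nonneg (cH_nonneg _) (Real.rpow_nonneg hu.le _))

lemma KH_ge_near {H : ℝ → ℝ} {u m : ℝ} (t : ℝ) (hu : 0 < u) (hut : u < t)
    (hH1 : 1/2 < H t) (hH2 : H t < 1) (hm : m ≤ cH (H t)) :
    m * (t - u) ^ (H t - 1/2) ≤ KH H t u := by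
  unfold KH
  rw [if_pos hut.le]
  have hIl := inner_lower2 hu hut hH1 hH2
  have step1 : cH (H t) * u ^ ((1:ℝ)/2 - H t) * (u ^ (H t - 1/2) * (t - u) ^ (H t - 1/2))
      ≤ cH (H t) * u ^ ((1:ℝ)/2 - H t)
        * ∫ v in u..t, (v - u) ^ (H t - 3/2) * v ^ (H t - 1/2) :=
    mul_le_mul_of_nonneg_left hIl (mul_nonneg (cH_nonneg _) (Real.rpow_nonneg hu.le _))
  have e : cH (H t) * u ^ ((1:ℝ)/2 - H t) * (u ^ (H t - 1/2) * (t - u) ^ (H t - 1/2))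
      = cH (H t) * (t - u) ^ (H t - 1/2) := by
    rw [show cH (H t) * u ^ ((1:ℝ)/2 - H t) * (u ^ (H t - 1/2) * (t - u) ^ (H t - 1/2))
        = cH (H t) * (u ^ ((1:ℝ)/2 - H t) * u ^ (H t - 1/2)) * (t - u) ^ (H t - 1/2) by ring,
      ← Real.rpow_add hu, show (1:ℝ)/2 - H t + (H t - 1/2) = 0 by ring, Real.rpow_zero, mul_one]
  calc m * (t - u) ^ (H t - 1/2) ≤ cH (H t) * (t - u) ^ (H t - 1/2) :=
        mul_le_mul_of_nonneg_right hm (Real.rpow_nonneg (by linarith) _)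
    _ = cH (H t) * u ^ ((1:ℝ)/2 - H t) * (u ^ (H t - 1/2) * (t - u) ^ (H t - 1/2)) := e.symm
    _ ≤ _ := step1

/-- for fixed `t > 0`, `R_H(t+h,t)` is of the exact order `(t+h)^{2H_{t+h}−1}`
as `h → ∞`. -/
theorem RH_asymptotic_h_to_infty (a b : ℝ) (ha : 1 / 2 < a) (hab : a ≤ b) (hb : b < 1)
    (H : ℝ → ℝ) (hmeas : Measurable H) (hH : ∀ t, 0 ≤ t → H t ∈ Set.Icc a b)
    (t : ℝ) (ht : 0 < t) :
    ∃ c C h₀ : ℝ, 0 < c ∧ c < C ∧ 0 < h₀ ∧ ∀ h : ℝ, h₀ ≤ h →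
      c * (t + h) ^ (2 * H (t + h) - 1) ≤ RH H (t + h) t ∧
        RH H (t + h) t ≤ C * (t + h) ^ (2 * H (t + h) - 1) := by
  obtain ⟨m, M, hm0, hmM⟩ := cH_bounds ha hab hb
  have hH0 : H t ∈ Icc a b := hH t ht.le
  have hH0a : 1/2 < H t := lt_of_lt_of_le ha hH0.1
  have hH0b : H t < 1 := lt_of_le_of_lt hH0.2 hb
  have hM0 : 0 ≤ M := le_trans hm0.le (le_trans (hmM _ hH0).1 (hmM _ hH0).2)
  set κ : ℝ := 1 - 2 ^ ((1:ℝ) - 2*a) with hκdef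
  have hκ0 : 0 < κ := by
    have h2 : (2:ℝ) ^ ((1:ℝ) - 2*a) < 1 :=
      Real.rpow_lt_one_of_one_lt_of_neg one_lt_two (by linarith)
    rw [hκdef]; linarith
  set δ : ℝ := min ((t/2) ^ ((1:ℝ)/2 - a)) ((t/2) ^ ((1:ℝ)/2 - b)) with hδdef
  have hδ0 : 0 < δ := lt_min (Real.rpow_pos_of_pos (by linarith) _)
    (Real.rpow_pos_of_pos (by linarith) _)
  set c1 : ℝ := m * κ * δ * (m * (t/2) ^ (H t - 1/2)) with hc1def
  have hc10 : 0 < c1 := by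
    have hp := Real.rpow_pos_of_pos (show (0:ℝ) < t/2 by linarith) (H t - 1/2)
    rw [hc1def]
    exact mul_pos (mul_pos (mul_pos hm0 hκ0) hδ0) (mul_pos hm0 hp)
  set Ct : ℝ := M / (a - 1/2) * t ^ (2 * H t - 1) with hCtdef
  have hCt0 : 0 ≤ Ct := mul_nonneg (div_nonneg hM0 (by linarith)) (Real.rpow_nonneg ht.le _)
  set Φ : ℝ → ℝ := fun u => u ^ ((1:ℝ) - a - H t) + u ^ ((1:ℝ) - b - H t) with hΦdef
  have hΦint : IntegrableOn Φ (Ioc 0 t) volume := by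
    have i1 : IntervalIntegrable (fun u : ℝ => u ^ ((1:ℝ) - a - H t)) volume 0 t :=
      intervalIntegral.intervalIntegrable_rpow' (by linarith)
    have i2 : IntervalIntegrable (fun u : ℝ => u ^ ((1:ℝ) - b - H t)) volume 0 t :=
      intervalIntegral.intervalIntegrable_rpow' (by linarith)
    have h12 := i1.add i2
    rwa [intervalIntegrable_iff_integrableOn_Ioc_of_le ht.le] at h12
  set Cup : ℝ := ∫ u in Ioc (0:ℝ) t, Φ u with hCupdef
  have hCup0 : 0 ≤ Cup := setIntegral_nonneg measurableSet_Ioc (fun u hu =>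
    add_nonneg (Real.rpow_nonneg hu.1.le _) (Real.rpow_nonneg hu.1.le _))
  set C0 : ℝ := M / (a - 1/2) * Ct * Cup with hC0def
  have hC00 : 0 ≤ C0 := mul_nonneg (mul_nonneg (div_nonneg hM0 (by linarith)) hCt0) hCup0
  set c : ℝ := c1 * (t/4) with hcdef
  have hc0 : 0 < c := mul_pos hc10 (by linarith)
  refine ⟨c, C0 + c + 1, t, hc0, by linarith, ht, ?_⟩
  intro h hh
  set T := t + h with hTdef
  have h2t : 2*t ≤ T := by rw [hTdef]; linarith
  have hT0 : 0 < T := by linarith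
  have htT : t ≤ T := by linarith
  have hHT : H T ∈ Icc a b := hH T (by linarith)
  have hHTa : 1/2 < H T := lt_of_lt_of_le ha hHT.1
  have hHTb : H T < 1 := lt_of_le_of_lt hHT.2 hb
  have hTe : 0 < T ^ (2 * H T - 1) := Real.rpow_pos_of_pos hT0 _
  have hRH : RH H T t = ∫ u in Ioc (0:ℝ) t, KH H T u * KH H t u := by
    unfold RH
    rw [min_eq_left htT, intervalIntegral.integral_of_le ht.le]
  have hub : ∀ u ∈ Ioc (0:ℝ) t, KH H T u * KH H t u
      ≤ (M / (a - 1/2) * Ct * T ^ (2 * H T - 1)) * Φ u := by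
    intro u hu
    have hu0 : 0 < u := hu.1
    have h1 : KH H T u ≤ M / (a - 1/2) * u ^ ((1:ℝ)/2 - H T) * T ^ (2 * H T - 1) :=
      KH_le ha hu0 (le_trans hu.2 htT) hHTa hHTb hHT.1 (hmM _ hHT).2
    have h2 : KH H t u ≤ M / (a - 1/2) * u ^ ((1:ℝ)/2 - H t) * t ^ (2 * H t - 1) :=
      KH_le ha hu0 hu.2 hH0a hH0b hH0.1 (hmM _ hH0).2
    have hmul := mul_le_mul h1 h2 (KH_nonneg hu0.le)
      (mul_nonneg (mul_nonneg (div_nonneg hM0 (by linarith)) (Real.rpow_nonneg hu0.le _)) hTe.le)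
    refine hmul.trans ?_
    have e1 : M / (a - 1/2) * u ^ ((1:ℝ)/2 - H T) * T ^ (2 * H T - 1)
        * (M / (a - 1/2) * u ^ ((1:ℝ)/2 - H t) * t ^ (2 * H t - 1))
        = (M / (a - 1/2) * Ct * T ^ (2 * H T - 1))
            * (u ^ ((1:ℝ)/2 - H T) * u ^ ((1:ℝ)/2 - H t)) := by
      rw [hCtdef]; ring
    rw [e1, ← Real.rpow_add hu0]
    apply mul_le_mul_of_nonneg_left _
      (mul_nonneg (mul_nonneg (div_nonneg hM0 (by linarith)) hCt0) hTe.le)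
    have hbet := (rpow_between hu0
      (show (1:ℝ) - b - H t ≤ (1:ℝ)/2 - H T + ((1:ℝ)/2 - H t) by linarith [hHT.2])
      (show (1:ℝ)/2 - H T + ((1:ℝ)/2 - H t) ≤ (1:ℝ) - a - H t by linarith [hHT.1])).2
    refine hbet.trans ?_
    rw [hΦdef]
    exact max_le (le_add_of_nonneg_left (Real.rpow_nonneg hu0.le _))
      (le_add_of_nonneg_right (Real.rpow_nonneg hu0.le _))
  have hmeasK : AEStronglyMeasurable (fun u => KH H T u * KH H t u)
      (volume.restrict (Ioc (0:ℝ) t)) :=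
    ((measurable_KH H T).mul (measurable_KH H t)).aestronglyMeasurable
  have hint : IntegrableOn (fun u => KH H T u * KH H t u) (Ioc (0:ℝ) t) volume := by
    apply Integrable.mono' (hΦint.const_mul (M / (a - 1/2) * Ct * T ^ (2 * H T - 1))) hmeasK
    filter_upwards [ae_restrict_mem measurableSet_Ioc] with u hu
    rw [Real.norm_eq_abs, abs_of_nonneg (mul_nonneg (KH_nonneg hu.1.le) (KH_nonneg hu.1.le))]
    exact hub u hu
  have hnonneg : 0 ≤ᵐ[volume.restrict (Ioc (0:ℝ) t)] fun u => KH H T u * KH H t u := by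
    filter_upwards [ae_restrict_mem measurableSet_Ioc] with u hu
    exact mul_nonneg (KH_nonneg hu.1.le) (KH_nonneg hu.1.le)
  constructor
  · have hlb : ∀ u ∈ Ioc (t/4) (t/2), c1 * T ^ (2 * H T - 1) ≤ KH H T u * KH H t u := by
      intro u hu
      have hu0 : 0 < u := lt_trans (by linarith) hu.1
      have hut : u < t := lt_of_le_of_lt hu.2 (by linarith)
      have h2u : 2*u ≤ T := by linarith [hu.2]
      have k1 : m * κ * u ^ ((1:ℝ)/2 - H T) * T ^ (2 * H T - 1) ≤ KH H T u := by
        rw [hκdef]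
        exact KH_ge_far ha hu0 h2u hHTa hHTb hHT.1 (hmM _ hHT).1 hm0.le
      have hexp : δ ≤ u ^ ((1:ℝ)/2 - H T) := by
        have s1 : (t/2) ^ ((1:ℝ)/2 - H T) ≤ u ^ ((1:ℝ)/2 - H T) :=
          Real.rpow_le_rpow_of_nonpos hu0 hu.2 (by linarith [hHT.1])
        refine le_trans ?_ s1
        rw [hδdef, min_comm]
        exact (rpow_between (show (0:ℝ) < t/2 by linarith)
          (show (1:ℝ)/2 - b ≤ (1:ℝ)/2 - H T by linarith [hHT.2])
          (show (1:ℝ)/2 - H T ≤ (1:ℝ)/2 - a by linarith [hHT.1])).1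
      have k1' : m * κ * δ * T ^ (2 * H T - 1) ≤ KH H T u := by
        refine le_trans ?_ k1
        apply mul_le_mul_of_nonneg_right _ hTe.le
        exact mul_le_mul_of_nonneg_left hexp (mul_nonneg hm0.le hκ0.le)
      have k2 : m * (t/2) ^ (H t - 1/2) ≤ KH H t u := by
        refine le_trans ?_ (KH_ge_near t hu0 hut hH0a hH0b (hmM _ hH0).1)
        apply mul_le_mul_of_nonneg_left _ hm0.le
        exact Real.rpow_le_rpow (by linarith) (by linarith [hu.2]) (by linarith)
      have hprod := mul_le_mul k1' k2
        (mul_nonneg hm0.le (Real.rpow_nonneg (by linarith) _)) (KH_nonneg hu0.le)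
      refine le_trans (le_of_eq ?_) hprod
      rw [hc1def]; ring
    have hsub : Ioc (t/4) (t/2) ⊆ Ioc (0:ℝ) t := Ioc_subset_Ioc (by linarith) (by linarith)
    have step2 : c1 * T ^ (2 * H T - 1) * (t/4)
        ≤ ∫ u in Ioc (t/4) (t/2), KH H T u * KH H t u := by
      have hgc := setIntegral_ge_of_const_le measurableSet_Ioc
        measure_Ioc_lt_top.ne hlb (hint.mono_set hsub)
      refine le_trans (le_of_eq ?_) hgc
      rw [measureReal_def, Real.volume_Ioc, ENNReal.toReal_ofReal (by linarith), smul_eq_mul]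
      ring
    have step1 : (∫ u in Ioc (t/4) (t/2), KH H T u * KH H t u)
        ≤ ∫ u in Ioc (0:ℝ) t, KH H T u * KH H t u :=
      setIntegral_mono_set hint hnonneg (HasSubset.Subset.eventuallyLE hsub)
    rw [hRH]
    calc c * T ^ (2 * H T - 1) = c1 * T ^ (2 * H T - 1) * (t/4) := by rw [hcdef]; ring
      _ ≤ _ := le_trans step2 step1
  · rw [hRH]
    calc (∫ u in Ioc (0:ℝ) t, KH H T u * KH H t u)
        ≤ ∫ u in Ioc (0:ℝ) t, (M / (a - 1/2) * Ct * T ^ (2 * H T - 1)) * Φ u :=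
          setIntegral_mono_on hint (hΦint.const_mul _) measurableSet_Ioc hub
      _ = (M / (a - 1/2) * Ct * T ^ (2 * H T - 1)) * Cup := by
          rw [MeasureTheory.integral_const_mul, hCupdef]
      _ = C0 * T ^ (2 * H T - 1) := by rw [hC0def]; ring
      _ ≤ (C0 + c + 1) * T ^ (2 * H T - 1) :=
          mul_le_mul_of_nonneg_right (by linarith) hTe.le
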